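/- arXiv:1711.01072 — 3 statements merged into one kernel-verified Lean document; each statement's English description precedes it below -/
import Mathlib

section
/- For β > 0, ε > 0 and every n ≥ 1, the n-th β-derivative of b₊(β,ε) = -1/(e^{-βε} - 1) equals (-ε)^n · Σ_{k=1}^{n} A(n,k-1) · b₊(β,ε)^{n+1-k} · b₋(β,ε)^{k}, where A(n,j) denotes the Eulerian numbers and b₋(β,ε) = 1/(e^{βε} - 1). -/
/-- Eulerian number `A n j`: the number of permutations of `{1,…,n}` with exactly `j` descents. -/
def eulerianNumber (n j : ℕ) : ℕ :=
  (Finset.univ.filter fun σ : Equiv.Perm (Fin n) =>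
    (Finset.univ.filter fun i : Fin n =>
      ∃ h : (i : ℕ) + 1 < n, σ ⟨(i : ℕ) + 1, h⟩ < σ i).card = j).card

open Finset Equiv

namespace EulerAux

variable {n : ℕ}

def desSet (σ : Equiv.Perm (Fin n)) : Finset (Fin n) :=
  Finset.univ.filter fun i : Fin n =>
    ∃ h : (i : ℕ) + 1 < n, σ ⟨(i : ℕ) + 1, h⟩ < σ i

def des (σ : Equiv.Perm (Fin n)) : ℕ := (desSet σ).card

lemma eulerianNumber_eq (n j : ℕ) :
    eulerianNumber n j
      = (Finset.univ.filter fun σ : Equiv.Perm (Fin n) => des σ = j).card := rfl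

lemma mem_desSet {σ : Equiv.Perm (Fin n)} {i : Fin n} :
    i ∈ desSet σ ↔ ∃ h : (i : ℕ) + 1 < n, σ ⟨(i : ℕ) + 1, h⟩ < σ i := by
  simp [desSet]

def ins (σ : Equiv.Perm (Fin n)) (p : Fin (n + 1)) : Equiv.Perm (Fin (n + 1)) :=
  ((finSuccEquiv' p).trans σ.optionCongr).trans (finSuccEquiv' (Fin.last n)).symm

lemma ins_apply_self (σ : Equiv.Perm (Fin n)) (p : Fin (n + 1)) :
    ins σ p p = Fin.last n := by
  simp [ins, finSuccEquiv'_at, finSuccEquiv'_symm_none]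

lemma ins_apply_succAbove (σ : Equiv.Perm (Fin n)) (p : Fin (n + 1)) (i : Fin n) :
    ins σ p (p.succAbove i) = (σ i).castSucc := by
  simp [ins, finSuccEquiv'_succAbove, finSuccEquiv'_symm_some, Fin.succAbove_last]

lemma ins_injective :
    Function.Injective (fun x : Equiv.Perm (Fin n) × Fin (n + 1) => ins x.1 x.2) := by
  rintro ⟨σ, p⟩ ⟨σ', p'⟩ h
  simp only at h
  have hp : p = p' := by
    by_contra hne
    obtain ⟨i, hi⟩ := Fin.exists_succAbove_eq hne
    have h1 : ins σ' p' (p'.succAbove i) = Fin.last n := by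
      rw [hi, ← h, ins_apply_self]
    rw [ins_apply_succAbove] at h1
    exact absurd h1 (Fin.castSucc_lt_last _).ne
  subst hp
  have hσ : σ = σ' := by
    ext i
    have h1 : ins σ p (p.succAbove i) = ins σ' p (p.succAbove i) := by rw [h]
    rw [ins_apply_succAbove, ins_apply_succAbove] at h1
    have := Fin.castSucc_injective _ h1
    simp [this]
  simp [hσ]

lemma ins_bijective :
    Function.Bijective (fun x : Equiv.Perm (Fin n) × Fin (n + 1) => ins x.1 x.2) := by
  rw [Fintype.bijective_iff_injective_and_card]
  refine ⟨ins_injective, ?_⟩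
  simp [Fintype.card_perm, Nat.factorial_succ, mul_comm]

lemma DP_ins_self (σ : Equiv.Perm (Fin n)) (p : Fin (n + 1)) :
    (∃ h : (p : ℕ) + 1 < n + 1, ins σ p ⟨(p : ℕ) + 1, h⟩ < ins σ p p) ↔ (p : ℕ) < n := by
  constructor
  · rintro ⟨h, -⟩; omega
  · intro hp
    refine ⟨by omega, ?_⟩
    have hne : (⟨(p : ℕ) + 1, by omega⟩ : Fin (n + 1)) ≠ p := by
      simp [Fin.ext_iff]
    obtain ⟨i, hi⟩ := Fin.exists_succAbove_eq hne
    rw [← hi, ins_apply_succAbove, ins_apply_self]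
    exact Fin.castSucc_lt_last _

lemma DP_ins_succAbove (σ : Equiv.Perm (Fin n)) (p : Fin (n + 1)) (i : Fin n) :
    (∃ h : ((p.succAbove i : Fin (n+1)) : ℕ) + 1 < n + 1,
        ins σ p ⟨((p.succAbove i : Fin (n+1)) : ℕ) + 1, h⟩ < ins σ p (p.succAbove i))
      ↔ ((∃ h : (i : ℕ) + 1 < n, σ ⟨(i : ℕ) + 1, h⟩ < σ i) ∧ (i : ℕ) + 1 ≠ (p : ℕ)) := by
  have hvi : ins σ p (p.succAbove i) = (σ i).castSucc := ins_apply_succAbove σ p i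
  rcases lt_trichotomy ((i : ℕ) + 1) (p : ℕ) with hc | hc | hc
  · -- i + 1 < p : succAbove i = castSucc i
    have hlt : i.castSucc < p := by rw [Fin.lt_def]; simp; omega
    have hv : ((p.succAbove i : Fin (n+1)) : ℕ) = (i : ℕ) := by
      rw [Fin.succAbove_of_castSucc_lt p i hlt]; simp
    have hin : (i : ℕ) + 1 < n := by have := p.isLt; omega
    set i' : Fin n := ⟨(i : ℕ) + 1, hin⟩ with hi'
    have hsa' : p.succAbove i' = i'.castSucc :=
      Fin.succAbove_of_castSucc_lt p i' (by rw [Fin.lt_def]; simp [hi']; omega)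
    have he : ∀ h, (⟨((p.succAbove i : Fin (n+1)) : ℕ) + 1, h⟩ : Fin (n+1))
        = p.succAbove i' := by
      intro h; rw [hsa']; simp [Fin.ext_iff, hv, hi']
    constructor
    · rintro ⟨h, hlt2⟩
      rw [he h, ins_apply_succAbove, hvi] at hlt2
      exact ⟨⟨hin, by simpa using hlt2⟩, by omega⟩
    · rintro ⟨⟨h, hlt2⟩, -⟩
      refine ⟨by omega, ?_⟩
      rw [he _, ins_apply_succAbove, hvi]
      simp only [Fin.castSucc_lt_castSucc_iff]
      exact hlt2
  · -- i + 1 = p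
    have hv : ((p.succAbove i : Fin (n+1)) : ℕ) = (i : ℕ) := by
      rw [Fin.succAbove_of_castSucc_lt p i (by rw [Fin.lt_def]; simp; omega)]; simp
    constructor
    · rintro ⟨h, hlt2⟩
      have he : (⟨((p.succAbove i : Fin (n+1)) : ℕ) + 1, h⟩ : Fin (n+1)) = p := by
        simp [Fin.ext_iff, hv, hc]
      rw [he, ins_apply_self, hvi] at hlt2
      exact absurd hlt2 (not_lt.2 (Fin.le_last _))
    · rintro ⟨-, hne⟩; omega
  · -- p ≤ i : succAbove i = succ i
    have hv : ((p.succAbove i : Fin (n+1)) : ℕ) = (i : ℕ) + 1 := by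
      rw [Fin.succAbove_of_le_castSucc p i (by rw [Fin.le_def]; simp; omega)]; simp
    by_cases hin : (i : ℕ) + 1 < n
    · set i' : Fin n := ⟨(i : ℕ) + 1, hin⟩ with hi'
      have hsa' : p.succAbove i' = i'.succ :=
        Fin.succAbove_of_le_castSucc p i' (by rw [Fin.le_def]; simp [hi']; omega)
      have he : ∀ h, (⟨((p.succAbove i : Fin (n+1)) : ℕ) + 1, h⟩ : Fin (n+1))
          = p.succAbove i' := by
        intro h; rw [hsa']; simp [Fin.ext_iff, hv, hi']
      constructor
      · rintro ⟨h, hlt2⟩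
        rw [he h, ins_apply_succAbove, hvi] at hlt2
        exact ⟨⟨hin, by simpa using hlt2⟩, by omega⟩
      · rintro ⟨⟨h, hlt2⟩, -⟩
        refine ⟨by omega, ?_⟩
        rw [he _, ins_apply_succAbove, hvi]
        simp only [Fin.castSucc_lt_castSucc_iff]
        exact hlt2
    · constructor
      · rintro ⟨h, -⟩; omega
      · rintro ⟨⟨h, -⟩, -⟩; omega


def nset (σ : Equiv.Perm (Fin n)) : Finset (Fin (n + 1)) :=
  insert (Fin.last n) ((desSet σ).image Fin.succ)

lemma last_not_mem_image (σ : Equiv.Perm (Fin n)) :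
    Fin.last n ∉ (desSet σ).image Fin.succ := by
  rw [mem_image]
  rintro ⟨i, hi, he⟩
  obtain ⟨h, -⟩ := mem_desSet.1 hi
  have : ((i.succ : Fin (n+1)) : ℕ) = ((Fin.last n : Fin (n+1)) : ℕ) := by rw [he]
  simp at this
  omega

lemma card_nset (σ : Equiv.Perm (Fin n)) : (nset σ).card = des σ + 1 := by
  rw [nset, card_insert_of_notMem (last_not_mem_image σ),
    card_image_of_injective _ (Fin.succ_injective _), des]

lemma des_ins (σ : Equiv.Perm (Fin n)) (p : Fin (n + 1)) :
    des (ins σ p) = if p ∈ nset σ then des σ else des σ + 1 := by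
  classical
  have h0 : des (ins σ p) = (if (p : ℕ) < n then 1 else 0)
      + ∑ i : Fin n, (if ((∃ h : (i : ℕ) + 1 < n, σ ⟨(i : ℕ) + 1, h⟩ < σ i)
          ∧ (i : ℕ) + 1 ≠ (p : ℕ)) then 1 else 0) := by
    rw [des, desSet, card_filter, Fin.sum_univ_succAbove _ p]
    congr 1
    · simp only [DP_ins_self σ p]
    · exact Finset.sum_congr rfl fun i _ => by simp only [DP_ins_succAbove σ p i]
  by_cases hp : p = Fin.last n
  · subst hp
    rw [h0, if_neg (by simp), if_pos (show Fin.last n ∈ nset σ by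
      rw [nset]; exact mem_insert_self _ _), zero_add, des, desSet, card_filter]
    refine Finset.sum_congr rfl fun i _ => ?_
    by_cases hD : ∃ h : (i : ℕ) + 1 < n, σ ⟨(i : ℕ) + 1, h⟩ < σ i
    · have hh : (i : ℕ) + 1 < n := hD.choose
      rw [if_pos ⟨hD, by simp; omega⟩, if_pos hD]
    · rw [if_neg (fun hc => hD hc.1), if_neg hD]
  · by_cases hm : p ∈ (desSet σ).image Fin.succ
    · obtain ⟨i₀, hi₀, hpe⟩ := mem_image.1 hm
      have hpv : (p : ℕ) = (i₀ : ℕ) + 1 := by rw [← hpe]; simp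
      obtain ⟨h₀, -⟩ := mem_desSet.1 hi₀
      rw [if_pos (show p ∈ nset σ by rw [nset]; exact mem_insert_of_mem hm), h0,
        if_pos (by omega)]
      have hiff : ∀ i : Fin n, ((i : ℕ) + 1 ≠ (p : ℕ)) ↔ i ≠ i₀ := by
        intro i
        rw [hpv, Ne, Ne, Fin.ext_iff]
        omega
      have key : (∑ i : Fin n, if ((∃ h : (i : ℕ) + 1 < n, σ ⟨(i : ℕ) + 1, h⟩ < σ i)
          ∧ (i : ℕ) + 1 ≠ (p : ℕ)) then 1 else 0) = des σ - 1 := by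
        have hfe : (Finset.univ.filter fun i : Fin n =>
            ((∃ h : (i : ℕ) + 1 < n, σ ⟨(i : ℕ) + 1, h⟩ < σ i) ∧ (i : ℕ) + 1 ≠ (p : ℕ)))
            = (desSet σ).erase i₀ := by
          ext i
          simp only [mem_filter, mem_univ, true_and, mem_erase, mem_desSet, hiff i]
          tauto
        rw [← card_filter, hfe, card_erase_of_mem hi₀, des]
      rw [key]
      have hpos : 1 ≤ des σ := Finset.card_pos.2 ⟨i₀, hi₀⟩
      omega
    · have hplt : (p : ℕ) < n := by
        have := p.isLt
        have : (p : ℕ) ≠ n := fun hc => hp (Fin.ext (by simp [hc]))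
        omega
      rw [if_neg (show p ∉ nset σ by
        rw [nset, mem_insert]; rintro (hc | hc); exacts [hp hc, hm hc]), h0, if_pos hplt]
      have key : (∑ i : Fin n, if ((∃ h : (i : ℕ) + 1 < n, σ ⟨(i : ℕ) + 1, h⟩ < σ i)
          ∧ (i : ℕ) + 1 ≠ (p : ℕ)) then 1 else 0) = des σ := by
        rw [des, desSet, card_filter]
        refine Finset.sum_congr rfl fun i _ => ?_
        by_cases hD : ∃ h : (i : ℕ) + 1 < n, σ ⟨(i : ℕ) + 1, h⟩ < σ i
        · refine if_congr ?_ rfl rfl |>.trans rfl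
          constructor
          · exact fun hc => hc.1
          · intro hDi
            refine ⟨hDi, fun hc => hm ?_⟩
            rw [mem_image]
            exact ⟨i, mem_desSet.2 hDi, Fin.ext (by simp [← hc])⟩
        · rw [if_neg (fun hc => hD hc.1), if_neg hD]
      rw [key]
      omega

lemma des_le (σ : Equiv.Perm (Fin n)) : des σ ≤ n := by
  have := Finset.card_le_univ (desSet σ)
  simpa [des, Finset.card_univ] using this

lemma des_lt (hn : 1 ≤ n) (σ : Equiv.Perm (Fin n)) : des σ < n := by
  have hmem : (⟨n - 1, by omega⟩ : Fin n) ∉ desSet σ := by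
    rw [mem_desSet]
    rintro ⟨h, -⟩
    simp at h
    omega
  have hss : desSet σ ⊂ Finset.univ :=
    Finset.ssubset_univ_iff.2 (fun he => hmem (by rw [he]; exact mem_univ _))
  have := Finset.card_lt_card hss
  simpa [des] using this

lemma sum_ins (σ : Equiv.Perm (Fin n)) (x y : ℝ) :
    ∑ p : Fin (n + 1), x ^ (des (ins σ p) + 1) * y ^ (n + 1 - des (ins σ p))
      = ((des σ + 1 : ℕ) : ℝ) * (x ^ (des σ + 1) * y ^ (n + 1 - des σ))
        + ((n - des σ : ℕ) : ℝ) * (x ^ (des σ + 2) * y ^ (n - des σ)) := by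
  classical
  have h1 : ∀ p : Fin (n + 1), x ^ (des (ins σ p) + 1) * y ^ (n + 1 - des (ins σ p))
      = if p ∈ nset σ then x ^ (des σ + 1) * y ^ (n + 1 - des σ)
        else x ^ (des σ + 2) * y ^ (n - des σ) := by
    intro p
    rw [des_ins]
    split_ifs with h
    · rfl
    · have he : n + 1 - (des σ + 1) = n - des σ := by omega
      rw [he]
  simp_rw [h1]
  rw [← Finset.sum_sdiff (Finset.subset_univ (nset σ))]
  have hA : ∑ p ∈ nset σ, (if p ∈ nset σ then x ^ (des σ + 1) * y ^ (n + 1 - des σ)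
      else x ^ (des σ + 2) * y ^ (n - des σ)) = (nset σ).card • (x ^ (des σ + 1) * y ^ (n + 1 - des σ)) := by
    rw [Finset.sum_congr rfl (fun p hp => if_pos hp), Finset.sum_const]
  have hB : ∑ p ∈ Finset.univ \ nset σ, (if p ∈ nset σ then x ^ (des σ + 1) * y ^ (n + 1 - des σ)
      else x ^ (des σ + 2) * y ^ (n - des σ))
      = (Finset.univ \ nset σ).card • (x ^ (des σ + 2) * y ^ (n - des σ)) := by
    rw [Finset.sum_congr rfl (fun p hp => if_neg (Finset.mem_sdiff.1 hp).2), Finset.sum_const]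
  rw [hA, hB, card_nset, Finset.card_sdiff_of_subset (Finset.subset_univ _), card_nset]
  simp only [Finset.card_univ, Fintype.card_fin]
  have he2 : n + 1 - (des σ + 1) = n - des σ := by omega
  rw [he2, nsmul_eq_mul, nsmul_eq_mul]
  push_cast
  ring

lemma sum_perm_succ (x y : ℝ) :
    ∑ τ : Equiv.Perm (Fin (n + 1)), x ^ (des τ + 1) * y ^ (n + 1 - des τ)
      = ∑ σ : Equiv.Perm (Fin n),
          (((des σ + 1 : ℕ) : ℝ) * (x ^ (des σ + 1) * y ^ (n + 1 - des σ))
            + ((n - des σ : ℕ) : ℝ) * (x ^ (des σ + 2) * y ^ (n - des σ))) := by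
  rw [← Function.Bijective.sum_comp ins_bijective
    (fun τ => x ^ (des τ + 1) * y ^ (n + 1 - des τ))]
  rw [Fintype.sum_prod_type]
  exact Finset.sum_congr rfl fun σ _ => sum_ins σ x y

lemma sum_des_eq (hn : 1 ≤ n) (F : ℕ → ℝ) :
    ∑ σ : Equiv.Perm (Fin n), F (des σ) = ∑ j ∈ Finset.range n, (eulerianNumber n j : ℝ) * F j := by
  classical
  rw [Finset.sum_comp F des]
  have hsub : (Finset.univ : Finset (Equiv.Perm (Fin n))).image des ⊆ Finset.range n := by
    intro j hj
    rw [Finset.mem_range]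
    obtain ⟨σ, -, rfl⟩ := Finset.mem_image.1 hj
    exact des_lt hn σ
  have h2 : ∑ j ∈ (Finset.univ : Finset (Equiv.Perm (Fin n))).image des,
        (Finset.univ.filter fun σ : Equiv.Perm (Fin n) => des σ = j).card • F j
      = ∑ j ∈ Finset.range n, (Finset.univ.filter fun σ : Equiv.Perm (Fin n) => des σ = j).card • F j := by
    apply Finset.sum_subset hsub
    intro j _ hj
    have hemp : (Finset.univ.filter fun σ : Equiv.Perm (Fin n) => des σ = j) = ∅ := by
      rw [Finset.filter_eq_empty_iff]
      intro σ _
      exact fun hc => hj (Finset.mem_image.2 ⟨σ, mem_univ _, hc⟩)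
    rw [hemp]
    simp
  rw [h2]
  exact Finset.sum_congr rfl fun j _ => by rw [nsmul_eq_mul, eulerianNumber_eq]

end EulerAux

namespace EulerAux

noncomputable def bm (ε b : ℝ) : ℝ := (Real.exp (b * ε) - 1)⁻¹
noncomputable def bp (ε b : ℝ) : ℝ := bm ε b + 1

variable {ε : ℝ}

lemma one_lt_exp (hε : 0 < ε) {b : ℝ} (hb : 0 < b) : 1 < Real.exp (b * ε) := by
  rw [← Real.exp_zero]
  exact Real.exp_lt_exp.2 (mul_pos hb hε)

lemma exp_sub_one_ne_zero (hε : 0 < ε) {b : ℝ} (hb : 0 < b) :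
    Real.exp (b * ε) - 1 ≠ 0 := by
  have := one_lt_exp hε hb
  linarith

lemma f_eq_bp (hε : 0 < ε) {b : ℝ} (hb : 0 < b) :
    -1 / (Real.exp (-(b * ε)) - 1) = bp ε b := by
  have hE : Real.exp (b * ε) ≠ 0 := (Real.exp_pos _).ne'
  have h1 : Real.exp (b * ε) - 1 ≠ 0 := exp_sub_one_ne_zero hε hb
  have h2 : (Real.exp (b * ε))⁻¹ - 1 ≠ 0 := by
    have h3 : (Real.exp (b * ε))⁻¹ < 1 := by
      rw [inv_lt_one_iff₀]
      right
      exact one_lt_exp hε hb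
    linarith
  have h4 : 1 - Real.exp (b * ε) ≠ 0 := by
    have := one_lt_exp hε hb
    linarith
  rw [bp, bm, Real.exp_neg]
  field_simp
  ring

lemma hasDerivAt_bm (hε : 0 < ε) {b : ℝ} (hb : 0 < b) :
    HasDerivAt (bm ε) (-ε * (bm ε b * bp ε b)) b := by
  have hx : HasDerivAt (fun x : ℝ => x * ε) ε b := by
    simpa using (hasDerivAt_id b).mul_const ε
  have h1 : HasDerivAt (fun x : ℝ => Real.exp (x * ε) - 1) (Real.exp (b * ε) * ε) b :=
    hx.exp.sub_const 1
  have h2 := h1.fun_inv (exp_sub_one_ne_zero hε hb)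
  have h1' := exp_sub_one_ne_zero hε hb
  refine h2.congr_deriv ?_
  rw [bm, bp, bm]
  field_simp
  ring

lemma hasDerivAt_bp (hε : 0 < ε) {b : ℝ} (hb : 0 < b) :
    HasDerivAt (bp ε) (-ε * (bm ε b * bp ε b)) b :=
  (hasDerivAt_bm hε hb).add_const 1

lemma hasDerivAt_mono (hε : 0 < ε) {b : ℝ} (hb : 0 < b) (a c : ℕ) :
    HasDerivAt (fun x => bm ε x ^ (a + 1) * bp ε x ^ c)
      (-ε * (((a + 1 : ℕ) : ℝ) * (bm ε b ^ (a + 1) * bp ε b ^ (c + 1))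
        + ((c : ℕ) : ℝ) * (bm ε b ^ (a + 2) * bp ε b ^ c))) b := by
  have h := ((hasDerivAt_bm hε hb).fun_pow (a + 1)).fun_mul ((hasDerivAt_bp hε hb).fun_pow c)
  refine h.congr_deriv ?_
  rcases c with _ | c
  · simp
    ring
  · simp only [Nat.add_sub_cancel]
    push_cast
    ring

lemma main_formula (hε : 0 < ε) :
    ∀ n : ℕ, 1 ≤ n → ∀ β : ℝ, 0 < β →
      iteratedDeriv n (fun b : ℝ => -1 / (Real.exp (-(b * ε)) - 1)) β
        = (-ε) ^ n * ∑ σ : Equiv.Perm (Fin n),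
            bm ε β ^ (des σ + 1) * bp ε β ^ (n - des σ) := by
  refine Nat.le_induction ?_ ?_
  · -- base case n = 1
    intro β hβ
    rw [iteratedDeriv_one]
    have hEq : (fun b : ℝ => -1 / (Real.exp (-(b * ε)) - 1)) =ᶠ[nhds β] bp ε := by
      filter_upwards [isOpen_Ioi.mem_nhds (show β ∈ Set.Ioi 0 from hβ)] with b hb
      exact f_eq_bp hε hb
    rw [hEq.deriv_eq, (hasDerivAt_bp hε hβ).deriv]
    have hdes : ∀ σ : Equiv.Perm (Fin 1), des σ = 0 := fun σ => by
      have := des_lt le_rfl σ; omega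
    rw [Finset.sum_congr rfl (fun σ _ => by rw [hdes σ])]
    rw [Finset.sum_const, Finset.card_univ, Fintype.card_perm]
    simp only [Fintype.card_fin, Nat.factorial_one, one_smul, pow_one]
    ring
  · -- inductive step
    intro n hn IH β hβ
    rw [iteratedDeriv_succ]
    have hEq : iteratedDeriv n (fun b : ℝ => -1 / (Real.exp (-(b * ε)) - 1))
        =ᶠ[nhds β] fun b => (-ε) ^ n * ∑ σ : Equiv.Perm (Fin n),
            bm ε b ^ (des σ + 1) * bp ε b ^ (n - des σ) := by
      filter_upwards [isOpen_Ioi.mem_nhds (show β ∈ Set.Ioi 0 from hβ)] with b hb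
      exact IH b hb
    rw [hEq.deriv_eq]
    have hD : HasDerivAt (fun b => (-ε) ^ n * ∑ σ : Equiv.Perm (Fin n),
          bm ε b ^ (des σ + 1) * bp ε b ^ (n - des σ))
        ((-ε) ^ n * ∑ σ : Equiv.Perm (Fin n),
          (-ε * (((des σ + 1 : ℕ) : ℝ) * (bm ε β ^ (des σ + 1) * bp ε β ^ (n - des σ + 1))
            + ((n - des σ : ℕ) : ℝ) * (bm ε β ^ (des σ + 2) * bp ε β ^ (n - des σ))))) β := by
      apply HasDerivAt.const_mul
      apply HasDerivAt.fun_sum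
      intro σ _
      exact hasDerivAt_mono hε hβ (des σ) (n - des σ)
    rw [hD.deriv]
    rw [sum_perm_succ (x := bm ε β) (y := bp ε β)]
    rw [pow_succ, mul_assoc]
    congr 1
    rw [Finset.mul_sum]
    apply Finset.sum_congr rfl
    intro σ _
    have hle := des_le σ
    have hexp : n + 1 - des σ = n - des σ + 1 := by omega
    rw [hexp]

end EulerAux

theorem stmt_6 (β ε : ℝ) (hβ : 0 < β) (hε : 0 < ε) (n : ℕ) (hn : 1 ≤ n) :
    iteratedDeriv n (fun b : ℝ => -1 / (Real.exp (-(b * ε)) - 1)) β =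
      (-ε) ^ n * ∑ k ∈ Finset.Icc 1 n,
        (eulerianNumber n (k - 1) : ℝ) *
          (-1 / (Real.exp (-(β * ε)) - 1)) ^ (n + 1 - k) *
          (1 / (Real.exp (β * ε) - 1)) ^ k := by
  rw [EulerAux.main_formula hε n hn β hβ]
  congr 1
  have hbp : -1 / (Real.exp (-(β * ε)) - 1) = EulerAux.bp ε β := EulerAux.f_eq_bp hε hβ
  have hbm : 1 / (Real.exp (β * ε) - 1) = EulerAux.bm ε β := by
    rw [EulerAux.bm, one_div]
  rw [hbp, hbm]
  have h1 := EulerAux.sum_des_eq (n := n) hn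
    (fun j => EulerAux.bm ε β ^ (j + 1) * EulerAux.bp ε β ^ (n - j))
  rw [h1]
  refine Finset.sum_nbij' (fun j => j + 1) (fun k => k - 1) ?_ ?_ ?_ ?_ ?_
  · intro j hj
    rw [Finset.mem_range] at hj
    rw [Finset.mem_Icc]
    show 1 ≤ j + 1 ∧ j + 1 ≤ n
    omega
  · intro k hk
    rw [Finset.mem_Icc] at hk
    rw [Finset.mem_range]
    show k - 1 < n
    omega
  · intro j hj
    rw [Finset.mem_range] at hj
    show j + 1 - 1 = j
    omega
  · intro k hk
    rw [Finset.mem_Icc] at hk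
    show k - 1 + 1 = k
    omega
  · intro j hj
    rw [Finset.mem_range] at hj
    show (eulerianNumber n j : ℝ) * (EulerAux.bm ε β ^ (j + 1) * EulerAux.bp ε β ^ (n - j))
        = (eulerianNumber n (j + 1 - 1) : ℝ) * EulerAux.bp ε β ^ (n + 1 - (j + 1))
          * EulerAux.bm ε β ^ (j + 1)
    have h2 : j + 1 - 1 = j := by omega
    have h3 : n + 1 - (j + 1) = n - j := by omega
    rw [h2, h3]
    ring
end

section
/- For β > 0, ε > 0 and every n ≥ 1, the n-th β-derivative of the Bose-Einstein factor b₋(β,ε) = 1/(e^{βε} - 1) equals (-ε)^n · Σ_{k=1}^{n} A(n,k-1) · b₋(β,ε)^{n+1-k} · b₊(β,ε)^{k}, where A(n,j) are the Eulerian numbers and b₊(β,ε) = -1/(e^{-βε}-1). -/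
open Finset Equiv

variable {n : ℕ}

/-- descent set of a permutation -/
def desF {m : ℕ} (σ : Equiv.Perm (Fin m)) : Finset (Fin m) :=
  Finset.univ.filter fun i : Fin m =>
    ∃ h : (i : ℕ) + 1 < m, σ ⟨(i : ℕ) + 1, h⟩ < σ i

def des {m : ℕ} (σ : Equiv.Perm (Fin m)) : ℕ := (desF σ).card

lemma mem_desF {m : ℕ} {σ : Equiv.Perm (Fin m)} {i : Fin m} :
    i ∈ desF σ ↔ ∃ h : (i : ℕ) + 1 < m, σ ⟨(i : ℕ) + 1, h⟩ < σ i := by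
  simp [desF]

/-- insertion of the max at position `p` -/
def ins (τ : Equiv.Perm (Fin n)) (p : Fin (n + 1)) : Equiv.Perm (Fin (n + 1)) :=
  ((finSuccEquiv' p).trans τ.optionCongr).trans (finSuccEquiv' (Fin.last n)).symm

lemma ins_apply_self (τ : Equiv.Perm (Fin n)) (p : Fin (n + 1)) :
    ins τ p p = Fin.last n := by
  simp [ins, finSuccEquiv'_at, finSuccEquiv'_symm_none]

lemma ins_apply_succAbove (τ : Equiv.Perm (Fin n)) (p : Fin (n + 1)) (i : Fin n) :
    ins τ p (p.succAbove i) = (τ i).castSucc := by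
  simp [ins, finSuccEquiv'_succAbove, finSuccEquiv'_symm_some, Fin.succAbove_last]

lemma ins_injective : Function.Injective
    (fun x : Equiv.Perm (Fin n) × Fin (n + 1) => ins x.1 x.2) := by
  rintro ⟨τ, p⟩ ⟨τ', p'⟩ h
  simp only at h
  have hp : p = p' := by
    by_contra hne
    obtain ⟨j, hj⟩ := Fin.exists_succAbove_eq hne
    have h1 : ins τ' p' p = (τ' j).castSucc := by rw [← hj, ins_apply_succAbove]
    have h2 : ins τ p p = Fin.last n := ins_apply_self τ p
    rw [h] at h2
    rw [h1] at h2
    exact (Fin.castSucc_lt_last (τ' j)).ne h2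
  subst hp
  have hτ : τ = τ' := by
    refine Equiv.ext fun j => ?_
    have := congrArg (fun σ : Equiv.Perm (Fin (n+1)) => σ (p.succAbove j)) h
    simp only [ins_apply_succAbove] at this
    exact Fin.castSucc_injective _ this
  simp [hτ]

lemma ins_bijective : Function.Bijective
    (fun x : Equiv.Perm (Fin n) × Fin (n + 1) => ins x.1 x.2) := by
  rw [Fintype.bijective_iff_injective_and_card]
  refine ⟨ins_injective, ?_⟩
  simp [Fintype.card_perm, Nat.factorial_succ, mul_comm]

lemma ins_desP_self (τ : Equiv.Perm (Fin n)) (p : Fin (n + 1)) :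
    (∃ h : (p : ℕ) + 1 < n + 1, ins τ p ⟨(p : ℕ) + 1, h⟩ < ins τ p p) ↔ (p : ℕ) < n := by
  constructor
  · rintro ⟨h, -⟩; omega
  · intro h
    refine ⟨by omega, ?_⟩
    rw [ins_apply_self]
    have hne : (⟨(p : ℕ) + 1, by omega⟩ : Fin (n + 1)) ≠ p := by
      intro he
      have := congrArg Fin.val he
      simp at this
    obtain ⟨j, hj⟩ := Fin.exists_succAbove_eq hne
    rw [← hj, ins_apply_succAbove]
    exact Fin.castSucc_lt_last (τ j)

lemma val_succAbove_of_lt {p : Fin (n+1)} {j : Fin n} (h : (j:ℕ) < (p:ℕ)) :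
    ((p.succAbove j : Fin (n+1)) : ℕ) = (j:ℕ) := by
  rw [Fin.succAbove_of_castSucc_lt _ _ (by simpa [Fin.lt_def] using h)]
  rfl

lemma val_succAbove_of_ge {p : Fin (n+1)} {j : Fin n} (h : (p:ℕ) ≤ (j:ℕ)) :
    ((p.succAbove j : Fin (n+1)) : ℕ) = (j:ℕ) + 1 := by
  rw [Fin.succAbove_of_le_castSucc _ _ (by simpa [Fin.le_def] using h)]
  rfl

lemma ins_desP_succAbove (τ : Equiv.Perm (Fin n)) (p : Fin (n + 1)) (j : Fin n) :
    (∃ h : ((p.succAbove j : Fin (n+1)) : ℕ) + 1 < n + 1,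
        ins τ p ⟨((p.succAbove j : Fin (n+1)) : ℕ) + 1, h⟩ < ins τ p (p.succAbove j)) ↔
      (j.succ ≠ p ∧ ∃ h : (j : ℕ) + 1 < n, τ ⟨(j : ℕ) + 1, h⟩ < τ j) := by
  have hσ : ins τ p (p.succAbove j) = (τ j).castSucc := ins_apply_succAbove τ p j
  rcases lt_or_ge (j : ℕ) (p : ℕ) with hc | hc
  · -- position is castSucc j (val = j)
    have hv : ((p.succAbove j : Fin (n+1)) : ℕ) = (j : ℕ) := val_succAbove_of_lt hc
    by_cases hp : (j : ℕ) + 1 = (p : ℕ)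
    · -- next position is p itself, value last: no descent
      have hpe : j.succ = p := by ext; simpa using hp
      have hnext : ∀ h, (⟨((p.succAbove j : Fin (n+1)) : ℕ) + 1, h⟩ : Fin (n+1)) = p := by
        intro h; ext; simp [hv, hp]
      constructor
      · rintro ⟨h, hlt⟩
        exfalso
        rw [hnext h, ins_apply_self, hσ] at hlt
        exact absurd hlt (Fin.le_last _).not_gt
      · rintro ⟨hne, -⟩; exact absurd hpe hne
    · -- j+1 < p
      have hjp : (j : ℕ) + 1 < (p : ℕ) := by omega
      have hjn : (j : ℕ) + 1 < n := by have := p.isLt; omega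
      set j' : Fin n := ⟨(j : ℕ) + 1, hjn⟩ with hj'
      have hnext : ∀ h, (⟨((p.succAbove j : Fin (n+1)) : ℕ) + 1, h⟩ : Fin (n+1)) =
          p.succAbove j' := by
        intro h; ext; rw [val_succAbove_of_lt (show (j':ℕ) < (p:ℕ) from hjp)]; simp [hv, hj']
      have hlt1 : ((p.succAbove j : Fin (n+1)) : ℕ) + 1 < n + 1 := by omega
      have hne : j.succ ≠ p := by
        intro he; exact hp (by simpa using congrArg Fin.val he)
      constructor
      · rintro ⟨h, hlt⟩
        refine ⟨hne, hjn, ?_⟩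
        rw [hnext h, ins_apply_succAbove, hσ] at hlt
        exact Fin.castSucc_lt_castSucc_iff.mp hlt
      · rintro ⟨-, h, hlt⟩
        refine ⟨hlt1, ?_⟩
        rw [hnext hlt1, ins_apply_succAbove, hσ]
        exact Fin.castSucc_lt_castSucc_iff.mpr hlt
  · -- position is succ j (val = j+1)
    have hv : ((p.succAbove j : Fin (n+1)) : ℕ) = (j : ℕ) + 1 := val_succAbove_of_ge hc
    have hne : j.succ ≠ p := by
      intro he
      have := congrArg Fin.val he
      simp at this
      omega
    constructor
    · rintro ⟨h, hlt⟩
      have hjn : (j : ℕ) + 1 < n := by omega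
      refine ⟨hne, hjn, ?_⟩
      set j' : Fin n := ⟨(j : ℕ) + 1, hjn⟩ with hj'
      have hnext : (⟨((p.succAbove j : Fin (n+1)) : ℕ) + 1, h⟩ : Fin (n+1)) = p.succAbove j' := by
        ext; rw [val_succAbove_of_ge (show (p:ℕ) ≤ (j':ℕ) by simp [hj']; omega)]; simp [hv, hj']
      rw [hnext, ins_apply_succAbove, hσ] at hlt
      exact Fin.castSucc_lt_castSucc_iff.mp hlt
    · rintro ⟨-, hjn, hlt⟩
      refine ⟨by omega, ?_⟩
      set j' : Fin n := ⟨(j : ℕ) + 1, hjn⟩ with hj'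
      have hnext : ∀ h, (⟨((p.succAbove j : Fin (n+1)) : ℕ) + 1, h⟩ : Fin (n+1)) =
          p.succAbove j' := by
        intro h; ext
        rw [val_succAbove_of_ge (show (p:ℕ) ≤ (j':ℕ) by simp [hj']; omega)]; simp [hv, hj']
      rw [hnext (by omega), ins_apply_succAbove, hσ]
      exact Fin.castSucc_lt_castSucc_iff.mpr hlt

/-- positions where inserting the max keeps the number of descents -/
def keep (τ : Equiv.Perm (Fin n)) : Finset (Fin (n + 1)) :=
  insert (Fin.last n) ((desF τ).image Fin.succ)

lemma card_keep (τ : Equiv.Perm (Fin n)) : (keep τ).card = des τ + 1 := by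
  rw [keep, Finset.card_insert_of_notMem, Finset.card_image_of_injective _ (Fin.succ_injective n),
    des]
  intro hmem
  simp only [Finset.mem_image] at hmem
  obtain ⟨j, hj, he⟩ := hmem
  rw [mem_desF] at hj
  obtain ⟨h, -⟩ := hj
  have := congrArg Fin.val he
  simp at this
  omega

lemma des_le (m : ℕ) (τ : Equiv.Perm (Fin (m + 1))) : des τ ≤ m := by
  have h : desF τ ⊆ Finset.univ.erase (Fin.last m) := by
    intro i hi
    rw [mem_desF] at hi
    obtain ⟨h, -⟩ := hi
    refine Finset.mem_erase.mpr ⟨?_, Finset.mem_univ _⟩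
    intro he
    have := congrArg Fin.val he
    simp at this
    omega
  calc des τ ≤ (Finset.univ.erase (Fin.last m)).card := Finset.card_le_card h
    _ = m := by rw [Finset.card_erase_of_mem (Finset.mem_univ _)]; simp

lemma des_ins (τ : Equiv.Perm (Fin n)) (p : Fin (n + 1)) :
    des (ins τ p) = if p ∈ keep τ then des τ else des τ + 1 := by
  have hdes : des (ins τ p) = (if (p : ℕ) < n then 1 else 0) +
      ∑ j : Fin n, (if j.succ ≠ p ∧ (∃ h : (j : ℕ) + 1 < n, τ ⟨(j : ℕ) + 1, h⟩ < τ j)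
        then 1 else 0) := by
    rw [des, desF, Finset.card_filter, Fin.sum_univ_succAbove _ p]
    congr 1
    · simp only [ins_desP_self]
    · refine Finset.sum_congr rfl fun j _ => ?_
      congr 1
      · simp only [eq_iff_iff]; exact ins_desP_succAbove τ p j
  have hdesτ : des τ = ∑ j : Fin n,
      (if (∃ h : (j : ℕ) + 1 < n, τ ⟨(j : ℕ) + 1, h⟩ < τ j) then 1 else 0) := by
    rw [des, desF, Finset.card_filter]
  by_cases hlast : p = Fin.last n
  · have h1 : ¬ ((p : ℕ) < n) := by subst hlast; simp
    have h2 : p ∈ keep τ := by simp [keep, hlast]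
    rw [hdes, if_pos h2, if_neg h1, hdesτ, zero_add]
    refine Finset.sum_congr rfl fun j _ => ?_
    by_cases hs : j.succ = p
    · have hjn : ¬ ((j : ℕ) + 1 < n) := by
        have := congrArg Fin.val hs
        subst hlast
        simp at this
        omega
      simp [hjn]
    · simp [hs]
  · have h1 : (p : ℕ) < n := Fin.val_lt_last hlast
    rw [hdes, if_pos h1]
    rcases Fin.eq_zero_or_eq_succ p with h0 | ⟨j₀, hj₀⟩
    · have h2 : p ∉ keep τ := by
        subst h0
        simp only [keep, Finset.mem_insert, Finset.mem_image, not_or]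
        refine ⟨hlast, ?_⟩
        rintro ⟨j, -, he⟩
        exact Fin.succ_ne_zero j he
      rw [if_neg h2, hdesτ]
      have hne : ∀ j : Fin n, j.succ ≠ p := by subst h0; exact fun j => Fin.succ_ne_zero j
      have hs2 : (∑ j : Fin n, (if j.succ ≠ p ∧ (∃ h : (j : ℕ) + 1 < n,
            τ ⟨(j : ℕ) + 1, h⟩ < τ j) then 1 else 0)) =
          ∑ j : Fin n, (if (∃ h : (j : ℕ) + 1 < n, τ ⟨(j : ℕ) + 1, h⟩ < τ j) then 1 else 0) :=
        Finset.sum_congr rfl fun j _ => by simp [hne j]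
      rw [hs2]
      omega
    · subst hj₀
      have hsum : ∑ j : Fin n, (if j.succ ≠ j₀.succ ∧
            (∃ h : (j : ℕ) + 1 < n, τ ⟨(j : ℕ) + 1, h⟩ < τ j) then 1 else 0) =
          ∑ j ∈ Finset.univ.erase j₀,
            (if (∃ h : (j : ℕ) + 1 < n, τ ⟨(j : ℕ) + 1, h⟩ < τ j) then 1 else 0) := by
        rw [← Finset.add_sum_erase _ _ (Finset.mem_univ j₀)]
        rw [if_neg (by simp)]
        rw [zero_add]
        refine Finset.sum_congr rfl fun j hj => ?_
        have hne : j ≠ j₀ := (Finset.mem_erase.mp hj).1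
        simp [hne]
      have hsplit : des τ = (if (∃ h : (j₀ : ℕ) + 1 < n, τ ⟨(j₀ : ℕ) + 1, h⟩ < τ j₀)
            then 1 else 0) + ∑ j ∈ Finset.univ.erase j₀,
            (if (∃ h : (j : ℕ) + 1 < n, τ ⟨(j : ℕ) + 1, h⟩ < τ j) then 1 else 0) := by
        rw [hdesτ, ← Finset.add_sum_erase _ _ (Finset.mem_univ j₀)]
      by_cases hd : j₀ ∈ desF τ
      · have h2 : j₀.succ ∈ keep τ := by
          simp only [keep, Finset.mem_insert, Finset.mem_image]
          exact Or.inr ⟨j₀, hd, rfl⟩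
        rw [if_pos h2, hsum]
        rw [mem_desF] at hd
        rw [hsplit, if_pos hd]
      · have h2 : j₀.succ ∉ keep τ := by
          simp only [keep, Finset.mem_insert, Finset.mem_image, not_or]
          refine ⟨hlast, ?_⟩
          rintro ⟨j, hj, he⟩
          exact hd (Fin.succ_injective n he ▸ hj)
        rw [if_neg h2, hsum]
        rw [mem_desF] at hd
        rw [hsplit, if_neg hd]
        omega

lemma eulerianNumber_eq (m j : ℕ) :
    eulerianNumber m j = (Finset.univ.filter fun σ : Equiv.Perm (Fin m) => des σ = j).card := rfl

lemma sum_ins_real (τ : Equiv.Perm (Fin n)) (F : ℕ → ℝ) :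
    ∑ p : Fin (n + 1), F (des (ins τ p)) =
      ((des τ + 1 : ℕ) : ℝ) * F (des τ) + ((n - des τ : ℕ) : ℝ) * F (des τ + 1) := by
  classical
  have h1 : ∀ p : Fin (n+1), F (des (ins τ p)) =
      if p ∈ keep τ then F (des τ) else F (des τ + 1) := fun p => by
    rw [des_ins]; split <;> rfl
  rw [Finset.sum_congr rfl fun p _ => h1 p, Finset.sum_ite, Finset.sum_const, Finset.sum_const]
  have h2 : Finset.univ.filter (fun p => p ∈ keep τ) = keep τ := by
    rw [Finset.filter_mem_eq_inter, Finset.univ_inter]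
  have h3 : Finset.univ.filter (fun p => p ∉ keep τ) = (keep τ)ᶜ := by
    ext p; simp
  rw [h2, h3, Finset.card_compl, card_keep]
  have h4 : Fintype.card (Fin (n+1)) - (des τ + 1) = n - des τ := by simp
  rw [h4, nsmul_eq_mul, nsmul_eq_mul]

lemma sum_des (m : ℕ) (hm : 1 ≤ m) (F : ℕ → ℝ) :
    ∑ σ : Equiv.Perm (Fin m), F (des σ) =
      ∑ j ∈ Finset.range m, (eulerianNumber m j : ℝ) * F j := by
  classical
  obtain ⟨m', rfl⟩ : ∃ m', m = m' + 1 := ⟨m - 1, by omega⟩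
  rw [← Finset.sum_fiberwise_of_maps_to (g := des)
    (t := Finset.range (m' + 1)) (fun σ _ => Finset.mem_range.mpr (by
      have := des_le m' σ; omega)) (fun σ => F (des σ))]
  refine Finset.sum_congr rfl fun j _ => ?_
  rw [eulerianNumber_eq]
  rw [Finset.sum_congr rfl (fun σ hσ => by
    rw [(Finset.mem_filter.mp hσ).2]), Finset.sum_const, nsmul_eq_mul]

noncomputable def uu (ε b : ℝ) : ℝ := 1 / (Real.exp (b * ε) - 1)
noncomputable def vv (ε b : ℝ) : ℝ := 1 + uu ε b

lemma exp_sub_one_ne {ε b : ℝ} (hb : 0 < b) (hε : 0 < ε) : Real.exp (b * ε) - 1 ≠ 0 := by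
  have : (1:ℝ) < Real.exp (b * ε) := by
    rw [show (1:ℝ) = Real.exp 0 by simp]
    exact Real.exp_lt_exp.mpr (by positivity)
  linarith

lemma hasDerivAt_uu {ε b : ℝ} (hb : 0 < b) (hε : 0 < ε) :
    HasDerivAt (uu ε) (-ε * (uu ε b * vv ε b)) b := by
  have hE := exp_sub_one_ne hb hε
  have h1 : HasDerivAt (fun x : ℝ => x * ε) ε b := hasDerivAt_mul_const ε
  have h2 : HasDerivAt (fun x : ℝ => Real.exp (x * ε)) (Real.exp (b * ε) * ε) b :=
    by have := (Real.hasDerivAt_exp (b * ε)).comp b h1; exact this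
  have h3 : HasDerivAt (fun x : ℝ => Real.exp (x * ε) - 1) (Real.exp (b * ε) * ε) b :=
    h2.sub_const 1
  have h4 := h3.inv hE
  have h5 : (fun x : ℝ => Real.exp (x * ε) - 1)⁻¹ = uu ε := by
    funext x; rw [Pi.inv_apply, uu, one_div]
  rw [h5] at h4
  replace h4 : HasDerivAt (uu ε) _ b := h4
  convert h4 using 1
  rw [uu, vv, uu]
  generalize Real.exp (b * ε) = e at hE ⊢; field_simp
  ring

lemma hasDerivAt_vv {ε b : ℝ} (hb : 0 < b) (hε : 0 < ε) :
    HasDerivAt (vv ε) (-ε * (uu ε b * vv ε b)) b := by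
  have h := (hasDerivAt_uu hb hε).const_add 1
  have h5 : (fun x : ℝ => 1 + uu ε x) = vv ε := by funext x; rw [vv]
  rwa [h5] at h

lemma hasDerivAt_term {ε b : ℝ} (hb : 0 < b) (hε : 0 < ε) (a c : ℕ) (ha : 1 ≤ a) (hc : 1 ≤ c) :
    HasDerivAt (fun x : ℝ => uu ε x ^ a * vv ε x ^ c)
      (-ε * ((a : ℝ) * uu ε b ^ a * vv ε b ^ (c + 1) +
        (c : ℝ) * uu ε b ^ (a + 1) * vv ε b ^ c)) b := by
  obtain ⟨a, rfl⟩ : ∃ a', a = a' + 1 := ⟨a - 1, by omega⟩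
  obtain ⟨c, rfl⟩ : ∃ c', c = c' + 1 := ⟨c - 1, by omega⟩
  have h := ((hasDerivAt_uu hb hε).fun_pow (a+1)).fun_mul ((hasDerivAt_vv hb hε).fun_pow (c+1))
  replace h : HasDerivAt (fun x : ℝ => uu ε x ^ (a+1) * vv ε x ^ (c+1)) _ b := h
  convert h using 1
  push_cast
  ring

lemma main_ind (ε : ℝ) (hε : 0 < ε) :
    ∀ n : ℕ, 1 ≤ n → ∀ β : ℝ, 0 < β →
      iteratedDeriv n (uu ε) β =
        (-ε) ^ n * ∑ σ : Equiv.Perm (Fin n),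
          uu ε β ^ (n - des σ) * vv ε β ^ (des σ + 1) := by
  intro n hn
  induction n, hn using Nat.le_induction with
  | base =>
    intro β hβ
    rw [iteratedDeriv_one, (hasDerivAt_uu hβ hε).deriv]
    have hdes : ∀ σ : Equiv.Perm (Fin 1), des σ = 0 := by
      intro σ
      rw [des, Finset.card_eq_zero, desF, Finset.filter_eq_empty_iff]
      rintro i -
      rintro ⟨h, -⟩
      omega
    rw [Finset.sum_congr rfl fun σ _ => by rw [hdes σ]]
    rw [Finset.sum_const, nsmul_eq_mul]
    have : (Finset.univ : Finset (Equiv.Perm (Fin 1))).card = 1 := by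
      simp [Fintype.card_perm]
    rw [this]
    ring
  | succ n hn IH =>
    intro β hβ
    rw [iteratedDeriv_succ]
    have hev : iteratedDeriv n (uu ε) =ᶠ[nhds β] fun b =>
        (-ε) ^ n * ∑ σ : Equiv.Perm (Fin n),
          uu ε b ^ (n - des σ) * vv ε b ^ (des σ + 1) :=
      Filter.eventually_of_mem (isOpen_Ioi.mem_nhds hβ) (fun b hb => IH b hb)
    rw [hev.deriv_eq]
    have hder : ∀ σ : Equiv.Perm (Fin n), σ ∈ (Finset.univ : Finset (Equiv.Perm (Fin n))) →
        HasDerivAt (fun x : ℝ => uu ε x ^ (n - des σ) * vv ε x ^ (des σ + 1))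
          (-ε * (((n - des σ : ℕ) : ℝ) * uu ε β ^ (n - des σ) * vv ε β ^ (des σ + 1 + 1) +
            ((des σ + 1 : ℕ) : ℝ) * uu ε β ^ (n - des σ + 1) * vv ε β ^ (des σ + 1))) β := by
      intro σ _
      refine hasDerivAt_term hβ hε _ _ ?_ (by omega)
      obtain ⟨m, rfl⟩ : ∃ m, n = m + 1 := ⟨n - 1, by omega⟩
      have := des_le m σ
      omega
    have H := (HasDerivAt.fun_sum hder).const_mul ((-ε : ℝ) ^ n)
    rw [H.deriv]
    -- now reindex the (n+1)-sum via the insertion bijection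
    have hre : ∑ σ : Equiv.Perm (Fin (n + 1)),
        uu ε β ^ (n + 1 - des σ) * vv ε β ^ (des σ + 1) =
        ∑ τ : Equiv.Perm (Fin n), ∑ p : Fin (n + 1),
          uu ε β ^ (n + 1 - des (ins τ p)) * vv ε β ^ (des (ins τ p) + 1) := by
      rw [← Function.Bijective.sum_comp ins_bijective
        (fun σ => uu ε β ^ (n + 1 - des σ) * vv ε β ^ (des σ + 1)), Fintype.sum_prod_type]
    rw [hre]
    rw [Finset.mul_sum, Finset.mul_sum]
    refine Finset.sum_congr rfl fun τ _ => ?_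
    rw [sum_ins_real τ (fun j => uu ε β ^ (n + 1 - j) * vv ε β ^ (j + 1))]
    have hd : des τ < n := by
      obtain ⟨m, rfl⟩ : ∃ m, n = m + 1 := ⟨n - 1, by omega⟩
      have := des_le m τ
      omega
    have e1 : n + 1 - des τ = (n - des τ) + 1 := by omega
    have e2 : n + 1 - (des τ + 1) = n - des τ := by omega
    rw [e1, e2]
    rw [pow_succ (-ε : ℝ) n]
    ring

theorem stmt_7 (β ε : ℝ) (hβ : 0 < β) (hε : 0 < ε) (n : ℕ) (hn : 1 ≤ n) :
    iteratedDeriv n (fun b : ℝ => 1 / (Real.exp (b * ε) - 1)) β =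
      (-ε) ^ n * ∑ k ∈ Finset.Icc 1 n,
        (eulerianNumber n (k - 1) : ℝ) *
          (1 / (Real.exp (β * ε) - 1)) ^ (n + 1 - k) *
          (-1 / (Real.exp (-(β * ε)) - 1)) ^ k := by
  have hmain := main_ind ε hε n hn β hβ
  have huu : (fun b : ℝ => 1 / (Real.exp (b * ε) - 1)) = uu ε := rfl
  rw [huu, hmain, sum_des n hn (fun j => uu ε β ^ (n - j) * vv ε β ^ (j + 1))]
  congr 1
  have hvv : -1 / (Real.exp (-(β * ε)) - 1) = vv ε β := by
    have h0 : Real.exp (β * ε) ≠ 0 := (Real.exp_pos _).ne'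
    have h1 : Real.exp (β * ε) - 1 ≠ 0 := exp_sub_one_ne hβ hε
    have h2 : 1 - Real.exp (β * ε) ≠ 0 := fun h => h1 (by linarith)
    rw [vv, uu, Real.exp_neg]
    field_simp
    ring
  have huu2 : (1 : ℝ) / (Real.exp (β * ε) - 1) = uu ε β := rfl
  rw [hvv, huu2]
  rw [show Finset.Icc 1 n = Finset.Ico 1 (n + 1) from (Finset.Ico_add_one_right_eq_Icc 1 n).symm,
    Finset.sum_Ico_eq_sum_range]
  simp only [Nat.add_sub_cancel_left, Nat.add_sub_cancel]
  refine Finset.sum_congr rfl fun j hj => ?_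
  have e2 : n + 1 - (1 + j) = n - j := by omega
  rw [e2, add_comm 1 j]
  ring
end

section
/- Let T : ℝ → ℂ be continuous such that for all t ≥ 0, T(t) = (1/√(2ε_λ)) · (A₊ e^{-iε_λ t} + A₋ e^{iε_λ t}) with A₊, A₋ ∈ ℂ and ε_λ > 0. Then for any t₁, t₂ ∈ ℝ, lim_{t→+∞} (1/t) ∫₀ᵗ T(t₁+τ) · T(t₂+τ) dτ = (A₊A₋/(2ε_λ)) · (e^{-iε_λ(t₁-t₂)} + e^{iε_λ(t₁-t₂)}). -/
open Complex MeasureTheory Filter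

theorem stmt_12 (εl : ℝ) (hεl : 0 < εl) (Ap Am : ℂ) (T : ℝ → ℂ)
    (hT : Continuous T)
    (hform : ∀ t : ℝ, 0 ≤ t →
      T t = (1 / (Real.sqrt (2 * εl) : ℂ)) *
        (Ap * Complex.exp (-Complex.I * εl * t) + Am * Complex.exp (Complex.I * εl * t)))
    (t₁ t₂ : ℝ) :
    Tendsto
      (fun t : ℝ => (1 / (t : ℂ)) * ∫ τ in (0:ℝ)..t, T (t₁ + τ) * T (t₂ + τ))
      atTop
      (nhds ((Ap * Am / (2 * εl : ℂ)) *
        (Complex.exp (-Complex.I * εl * (t₁ - t₂)) +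
         Complex.exp (Complex.I * εl * (t₁ - t₂))))) := by
  set c : ℝ := max 0 (max (-t₁) (-t₂)) with hcdef
  have hε2 : (0:ℝ) < 2 * εl := by linarith
  have hεC : ((2:ℂ) * εl) ≠ 0 := by
    simp [Complex.ofReal_ne_zero, hεl.ne']
  set L : ℂ := (Ap * Am / (2 * εl : ℂ)) *
      (Complex.exp (-Complex.I * εl * (t₁ - t₂)) +
       Complex.exp (Complex.I * εl * (t₁ - t₂))) with hL
  set P : ℂ := Ap ^ 2 * Complex.exp (-Complex.I * εl * t₁) *
      Complex.exp (-Complex.I * εl * t₂) / (2 * εl) with hP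
  set Q : ℂ := Am ^ 2 * Complex.exp (Complex.I * εl * t₁) *
      Complex.exp (Complex.I * εl * t₂) / (2 * εl) with hQ
  set g : ℝ → ℂ := fun τ => T (t₁ + τ) * T (t₂ + τ) with hg
  set k₁ : ℂ := -2 * Complex.I * εl with hk₁
  set k₂ : ℂ := 2 * Complex.I * εl with hk₂
  have hk₁0 : k₁ ≠ 0 := by
    rw [hk₁]
    exact mul_ne_zero (mul_ne_zero (by norm_num) Complex.I_ne_zero)
      (Complex.ofReal_ne_zero.2 hεl.ne')
  have hk₂0 : k₂ ≠ 0 := by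
    rw [hk₂]
    exact mul_ne_zero (mul_ne_zero (by norm_num) Complex.I_ne_zero)
      (Complex.ofReal_ne_zero.2 hεl.ne')
  set h : ℝ → ℂ := fun τ => L + P * Complex.exp (k₁ * τ) + Q * Complex.exp (k₂ * τ) with hh
  -- g = h beyond c
  have hgh : ∀ τ : ℝ, c ≤ τ → g τ = h τ := by
    intro τ hτ
    have ht1 : -t₁ ≤ c := le_trans (le_max_left _ _) (le_max_right _ _)
    have ht2 : -t₂ ≤ c := le_trans (le_max_right _ _) (le_max_right _ _)
    have h1 : (0:ℝ) ≤ t₁ + τ := by linarith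
    have h2 : (0:ℝ) ≤ t₂ + τ := by linarith
    have E1 : Complex.exp (-Complex.I * εl * ((t₁ + τ : ℝ) : ℂ)) =
        Complex.exp (-Complex.I * εl * t₁) * Complex.exp (-Complex.I * εl * τ) := by
      rw [← Complex.exp_add]; congr 1; push_cast; ring
    have E2 : Complex.exp (-Complex.I * εl * ((t₂ + τ : ℝ) : ℂ)) =
        Complex.exp (-Complex.I * εl * t₂) * Complex.exp (-Complex.I * εl * τ) := by
      rw [← Complex.exp_add]; congr 1; push_cast; ring
    have F1 : Complex.exp (Complex.I * εl * ((t₁ + τ : ℝ) : ℂ)) =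
        Complex.exp (Complex.I * εl * t₁) * Complex.exp (Complex.I * εl * τ) := by
      rw [← Complex.exp_add]; congr 1; push_cast; ring
    have F2 : Complex.exp (Complex.I * εl * ((t₂ + τ : ℝ) : ℂ)) =
        Complex.exp (Complex.I * εl * t₂) * Complex.exp (Complex.I * εl * τ) := by
      rw [← Complex.exp_add]; congr 1; push_cast; ring
    have E3 : Complex.exp (k₁ * τ) =
        Complex.exp (-Complex.I * εl * τ) * Complex.exp (-Complex.I * εl * τ) := by
      rw [← Complex.exp_add, hk₁]; congr 1; ring
    have E4 : Complex.exp (k₂ * τ) =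
        Complex.exp (Complex.I * εl * τ) * Complex.exp (Complex.I * εl * τ) := by
      rw [← Complex.exp_add, hk₂]; congr 1; ring
    have E5 : Complex.exp (-Complex.I * εl * ((t₁:ℂ) - t₂)) =
        Complex.exp (-Complex.I * εl * t₁) * Complex.exp (Complex.I * εl * t₂) := by
      rw [← Complex.exp_add]; congr 1; ring
    have E6 : Complex.exp (Complex.I * εl * ((t₁:ℂ) - t₂)) =
        Complex.exp (Complex.I * εl * t₁) * Complex.exp (-Complex.I * εl * t₂) := by
      rw [← Complex.exp_add]; congr 1; ring
    have hxy : Complex.exp (-Complex.I * εl * τ) * Complex.exp (Complex.I * εl * τ) = 1 := by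
      rw [← Complex.exp_add, show (-Complex.I * εl * τ + Complex.I * εl * τ : ℂ) = 0 by ring,
        Complex.exp_zero]
    have hs : ((Real.sqrt (2 * εl) : ℝ) : ℂ) * ((Real.sqrt (2 * εl) : ℝ) : ℂ) = 2 * (εl:ℂ) := by
      rw [← Complex.ofReal_mul, Real.mul_self_sqrt hε2.le]; push_cast; ring
    have hss : (1 / ((Real.sqrt (2 * εl) : ℝ) : ℂ)) * (1 / ((Real.sqrt (2 * εl) : ℝ) : ℂ)) =
        1 / (2 * (εl:ℂ)) := by rw [div_mul_div_comm, one_mul, hs]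
    simp only [hg, hh, hL, hP, hQ]
    rw [hform _ h1, hform _ h2, E1, E2, F1, F2, E3, E4, E5, E6, mul_mul_mul_comm, hss]
    linear_combination (Ap * Am *
      (Complex.exp (-Complex.I * εl * t₁) * Complex.exp (Complex.I * εl * t₂) +
       Complex.exp (Complex.I * εl * t₁) * Complex.exp (-Complex.I * εl * t₂)) / (2 * (εl:ℂ))) * hxy
  -- continuity / integrability
  have hgc : Continuous g :=
    (hT.comp (continuous_const.add continuous_id)).mul
      (hT.comp (continuous_const.add continuous_id))
  have hgi : ∀ a b : ℝ, IntervalIntegrable g volume a b := fun a b => hgc.intervalIntegrable a b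
  have hcexp : ∀ k : ℂ, Continuous fun τ : ℝ => Complex.exp (k * τ) := fun k =>
    Complex.continuous_exp.comp (continuous_const.mul Complex.continuous_ofReal)
  -- integral of h
  have hint : ∀ t : ℝ, (∫ τ in c..t, h τ) =
      L * ((t:ℂ) - c) + P * ((Complex.exp (k₁ * t) - Complex.exp (k₁ * c)) / k₁)
        + Q * ((Complex.exp (k₂ * t) - Complex.exp (k₂ * c)) / k₂) := by
    intro t
    have i1 : IntervalIntegrable (fun _ : ℝ => L) volume c t :=
      intervalIntegrable_const
    have i2 : IntervalIntegrable (fun τ : ℝ => P * Complex.exp (k₁ * τ)) volume c t :=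
      (continuous_const.mul (hcexp k₁)).intervalIntegrable c t
    have i3 : IntervalIntegrable (fun τ : ℝ => Q * Complex.exp (k₂ * τ)) volume c t :=
      (continuous_const.mul (hcexp k₂)).intervalIntegrable c t
    simp only [hh]
    rw [intervalIntegral.integral_add (i1.add i2) i3, intervalIntegral.integral_add i1 i2,
      intervalIntegral.integral_const, intervalIntegral.integral_const_mul,
      intervalIntegral.integral_const_mul, integral_exp_mul_complex hk₁0,
      integral_exp_mul_complex hk₂0]
    simp only [Complex.real_smul]
    push_cast
    ring
  -- splitting of the main integral
  have hsplit : ∀ t : ℝ, (∫ τ in (0:ℝ)..t, g τ) = (∫ τ in (0:ℝ)..c, g τ) + ∫ τ in c..t, g τ :=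
    fun t => (intervalIntegral.integral_add_adjacent_intervals (hgi 0 c) (hgi c t)).symm
  set C₀ : ℂ := ∫ τ in (0:ℝ)..c, g τ with hC₀
  set B : ℝ → ℂ := fun t => C₀ - c * L + P * ((Complex.exp (k₁ * t) - Complex.exp (k₁ * c)) / k₁)
        + Q * ((Complex.exp (k₂ * t) - Complex.exp (k₂ * c)) / k₂) with hB
  have key : ∀ t : ℝ, max c 1 ≤ t →
      (1 / (t : ℂ)) * (∫ τ in (0:ℝ)..t, g τ) - L = (1 / (t:ℂ)) * B t := by
    intro t ht
    have hct : c ≤ t := le_trans (le_max_left _ _) ht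
    have ht1 : (1:ℝ) ≤ t := le_trans (le_max_right _ _) ht
    have htC : (t:ℂ) ≠ 0 := by
      exact_mod_cast Complex.ofReal_ne_zero.2 (by linarith : t ≠ 0)
    have hcongr : (∫ τ in c..t, g τ) = ∫ τ in c..t, h τ := by
      apply intervalIntegral.integral_congr
      intro τ hτ
      rw [Set.uIcc_of_le hct] at hτ
      exact hgh τ hτ.1
    rw [hsplit t, hcongr, hint t, hB]
    field_simp
    ring
  -- norm bounds
  have hnorm1 : ∀ r : ℝ, ‖Complex.exp (k₁ * r)‖ = 1 := by
    intro r
    rw [hk₁, Complex.norm_exp]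
    have : (-2 * Complex.I * (εl:ℂ) * (r:ℂ)).re = 0 := by simp
    rw [this, Real.exp_zero]
  have hnorm2 : ∀ r : ℝ, ‖Complex.exp (k₂ * r)‖ = 1 := by
    intro r
    rw [hk₂, Complex.norm_exp]
    have : (2 * Complex.I * (εl:ℂ) * (r:ℂ)).re = 0 := by simp
    rw [this, Real.exp_zero]
  have hknorm : ‖k₁‖ = 2 * εl ∧ ‖k₂‖ = 2 * εl := by
    constructor <;>
    · simp [hk₁, hk₂, map_mul, abs_of_pos hεl]
  set M : ℝ := ‖C₀ - c * L‖ + ‖P‖ * (2 / (2 * εl)) + ‖Q‖ * (2 / (2 * εl)) with hM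
  have hd : ∀ (k : ℂ), ‖k‖ = 2 * εl → ∀ t : ℝ,
      ‖(Complex.exp (k * t) - Complex.exp (k * c)) / k‖ ≤ 2 / (2 * εl) →
      True := fun _ _ _ _ => trivial
  have hdb : ∀ t : ℝ, ‖(Complex.exp (k₁ * t) - Complex.exp (k₁ * c)) / k₁‖ ≤ 2 / (2 * εl) := by
    intro t
    rw [norm_div, hknorm.1]
    gcongr
    calc ‖Complex.exp (k₁ * t) - Complex.exp (k₁ * c)‖
        ≤ ‖Complex.exp (k₁ * (t:ℝ))‖ + ‖Complex.exp (k₁ * (c:ℝ))‖ := norm_sub_le _ _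
      _ = 2 := by rw [hnorm1, hnorm1]; norm_num
  have hdb2 : ∀ t : ℝ, ‖(Complex.exp (k₂ * t) - Complex.exp (k₂ * c)) / k₂‖ ≤ 2 / (2 * εl) := by
    intro t
    rw [norm_div, hknorm.2]
    gcongr
    calc ‖Complex.exp (k₂ * t) - Complex.exp (k₂ * c)‖
        ≤ ‖Complex.exp (k₂ * (t:ℝ))‖ + ‖Complex.exp (k₂ * (c:ℝ))‖ := norm_sub_le _ _
      _ = 2 := by rw [hnorm2, hnorm2]; norm_num
  have hBbound : ∀ t : ℝ, ‖B t‖ ≤ M := by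
    intro t
    have b1 : ‖P * ((Complex.exp (k₁ * t) - Complex.exp (k₁ * c)) / k₁)‖ ≤
        ‖P‖ * (2 / (2 * εl)) := by
      rw [norm_mul]
      exact mul_le_mul_of_nonneg_left (hdb t) (norm_nonneg _)
    have b2 : ‖Q * ((Complex.exp (k₂ * t) - Complex.exp (k₂ * c)) / k₂)‖ ≤
        ‖Q‖ * (2 / (2 * εl)) := by
      rw [norm_mul]
      exact mul_le_mul_of_nonneg_left (hdb2 t) (norm_nonneg _)
    calc ‖B t‖ ≤ ‖C₀ - (c:ℂ) * L + P * ((Complex.exp (k₁ * t) - Complex.exp (k₁ * c)) / k₁)‖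
          + ‖Q * ((Complex.exp (k₂ * t) - Complex.exp (k₂ * c)) / k₂)‖ := norm_add_le _ _
      _ ≤ (‖C₀ - (c:ℂ) * L‖ + ‖P * ((Complex.exp (k₁ * t) - Complex.exp (k₁ * c)) / k₁)‖)
          + ‖Q * ((Complex.exp (k₂ * t) - Complex.exp (k₂ * c)) / k₂)‖ := by
            gcongr
            exact norm_add_le _ _
      _ ≤ M := by
            rw [hM]
            exact add_le_add (add_le_add le_rfl b1) b2
  have hM0 : Tendsto (fun t : ℝ => M / t) atTop (nhds (0:ℝ)) :=
    tendsto_const_nhds.div_atTop tendsto_id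
  have h0 : Tendsto (fun t : ℝ => (1 / (t : ℂ)) * (∫ τ in (0:ℝ)..t, g τ) - L) atTop (nhds 0) := by
    apply squeeze_zero_norm' _ hM0
    filter_upwards [eventually_ge_atTop (max c 1)] with t ht
    have ht1 : (1:ℝ) ≤ t := le_trans (le_max_right _ _) ht
    have ht0 : (0:ℝ) < t := by linarith
    rw [key t ht]
    calc ‖(1 / (t:ℂ)) * B t‖ = ‖B t‖ / t := by
          rw [norm_mul, norm_div, norm_one, Complex.norm_real, Real.norm_eq_abs,
            abs_of_pos ht0]
          ring
      _ ≤ M / t := by gcongr; exact hBbound t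
  exact tendsto_sub_nhds_zero_iff.mp h0
end
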